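/- For every integer h ≥ 4, D_R(C_h) − D_R(S) = (h² − 8h + 6)/3, where C_h is the cycle on h vertices and S is the graph on h vertices obtained from the cycle C_{h−1} by attaching one pendent vertex to a vertex u of C_{h−1}. -/

import Mathlib

open Finset

/-- Effective resistance between two vertices of a graph (for a connected graph
this is the effective resistance when every edge is a unit resistor), defined via
the matrix-tree / spanning-two-forest determinant formula. -/
noncomputable def effRes {V : Type*} [Finite V] (G : SimpleGraph V) (u v : V) : ℝ :=
  letI := Fintype.ofFinite V
  letI := Classical.decEq V
  letI : DecidableRel G.Adj := Classical.decRel _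
  if u = v then 0
  else
    Matrix.det ((G.lapMatrix ℝ).submatrix
        (fun w : {w : V // w ≠ u ∧ w ≠ v} => (w : V)) (fun w => (w : V)))
      / Matrix.det ((G.lapMatrix ℝ).submatrix
        (fun w : {w : V // w ≠ u} => (w : V)) (fun w => (w : V)))

/-- The degree resistance distance `D_R(G) = Σ_{ {u,v} ⊆ V } (d(u)+d(v)) R(u,v)`. -/
noncomputable def degRes {V : Type*} [Finite V] (G : SimpleGraph V) : ℝ :=
  letI := Fintype.ofFinite V
  letI := Classical.decEq V
  letI : DecidableRel G.Adj := Classical.decRel _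
  (1 / 2) * ∑ u : V, ∑ v : V, ((G.degree u : ℝ) + (G.degree v : ℝ)) * effRes G u v

/-- The Kirchhoff index `Kf(G) = Σ_{ {u,v} ⊆ V } R(u,v)`. -/
noncomputable def kirchhoffIndex {V : Type*} [Finite V] (G : SimpleGraph V) : ℝ :=
  letI := Fintype.ofFinite V
  (1 / 2) * ∑ u : V, ∑ v : V, effRes G u v

/-- `Kf_v(G) = Σ_{u ∈ V} R(u,v)`. -/
noncomputable def Kfv {V : Type*} [Finite V] (G : SimpleGraph V) (v : V) : ℝ :=
  letI := Fintype.ofFinite V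
  ∑ u : V, effRes G u v

/-- `D_v(G) = Σ_{u ∈ V} d(u) R(u,v)`. -/
noncomputable def Dv {V : Type*} [Finite V] (G : SimpleGraph V) (v : V) : ℝ :=
  letI := Fintype.ofFinite V
  letI := Classical.decEq V
  letI : DecidableRel G.Adj := Classical.decRel _
  ∑ u : V, (G.degree u : ℝ) * effRes G u v

/-- A subgraph is a cycle if it is connected and `2`-regular. -/
def IsCycleSubgraph {V : Type*} {G : SimpleGraph V} (H : G.Subgraph) : Prop :=
  H.coe.Connected ∧ ∀ v ∈ H.verts, {u | H.Adj v u}.ncard = 2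

/-- A cactus is a connected graph in which any two distinct cycles share at most
one vertex (equivalently, every block is an edge or a cycle). -/
def IsCactus {V : Type*} (G : SimpleGraph V) : Prop :=
  G.Connected ∧ ∀ H₁ H₂ : G.Subgraph, IsCycleSubgraph H₁ → IsCycleSubgraph H₂ →
    H₁ ≠ H₂ → (H₁.verts ∩ H₂.verts).ncard ≤ 1

/-- The number of cycles of a graph. -/
noncomputable def numCycles {V : Type*} (G : SimpleGraph V) : ℕ :=
  {H : G.Subgraph | IsCycleSubgraph H}.ncard

/-- `G ∈ Cact(n;t)`: `G` is a cactus with `n` vertices and `t` cycles. -/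
def MemCact {V : Type*} (n t : ℕ) (G : SimpleGraph V) : Prop :=
  IsCactus G ∧ Nat.card V = n ∧ numCycles G = t

/-- `G⁰(n,t)`: `t` triangles (on vertices `2i+1, 2i+2`, `i < t`) and `n - 2t - 1`
pendent edges, all sharing the common vertex `0`. -/
def G0 (n t : ℕ) : SimpleGraph (Fin n) :=
  SimpleGraph.fromRel (fun a b =>
    a.val = 0 ∨ (Odd a.val ∧ b.val = a.val + 1 ∧ b.val ≤ 2 * t))

/-- The graph `S` on `h` vertices: the cycle `C_{h-1}` on the vertices
`0, 1, …, h-2` together with the pendent vertex `h-1` attached to `0`. -/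
def cycleWithPendent (h : ℕ) : SimpleGraph (Fin h) :=
  SimpleGraph.fromRel (fun a b =>
    (b.val = a.val + 1 ∧ b.val ≤ h - 2) ∨ (a.val = 0 ∧ b.val = h - 2) ∨
    (a.val = 0 ∧ b.val = h - 1))



open Matrix



section generic
variable {V : Type*} [Fintype V] [DecidableEq V]

lemma effRes_def (G : SimpleGraph V) [DecidableRel G.Adj] (u v : V) :
    effRes G u v = if u = v then 0
  else
    Matrix.det ((G.lapMatrix ℝ).submatrix
        (fun w : {w : V // w ≠ u ∧ w ≠ v} => (w : V)) (fun w : {w : V // w ≠ u ∧ w ≠ v} => (w : V)))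
      / Matrix.det ((G.lapMatrix ℝ).submatrix
        (fun w : {w : V // w ≠ u} => (w : V)) (fun w : {w : V // w ≠ u} => (w : V))) := by
  unfold effRes
  congr!

/-- det of updateRow with a basis vector at the diagonal = det of the minor. -/
lemma det_updateRow_single (A : Matrix V V ℝ) (v : V) :
    (A.updateRow v (Pi.single v 1)).det
      = (A.submatrix (fun w : {w : V // w ≠ v} => (w : V)) (fun w : {w : V // w ≠ v} => (w : V))).det := by
  classical
  let e : ({w : V // w ≠ v} ⊕ Unit) ≃ V :=
    { toFun := fun x => match x with
        | Sum.inl w => (w : V)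
        | Sum.inr _ => v
      invFun := fun w => if h : w = v then Sum.inr () else Sum.inl ⟨w, h⟩
      left_inv := by
        rintro (⟨w, hw⟩ | ⟨⟩)
        · simp [hw]
        · simp
      right_inv := by
        intro w
        by_cases h : w = v <;> simp [h] }
  have : (A.updateRow v (Pi.single v 1)).submatrix e e =
      Matrix.fromBlocks (A.submatrix (fun w : {w : V // w ≠ v} => (w : V)) (fun w : {w : V // w ≠ v} => (w : V)))
        (Matrix.of fun w _ => A (w : V) v) 0 1 := by
    ext i j
    rcases i with (⟨w, hw⟩ | ⟨⟩)
    · rcases j with (⟨w', hw'⟩ | ⟨⟩)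
      · simp [e, Matrix.updateRow_apply, hw, hw', Pi.single_apply, Matrix.one_apply]
      · simp [e, Matrix.updateRow_apply, hw, Pi.single_apply, Matrix.one_apply]
    · rcases j with (⟨w', hw'⟩ | ⟨⟩)
      · simp [e, Matrix.updateRow_apply, hw', Pi.single_apply, Matrix.one_apply]
      · simp [e, Matrix.updateRow_apply, Pi.single_apply, Matrix.one_apply]
  calc (A.updateRow v (Pi.single v 1)).det
      = ((A.updateRow v (Pi.single v 1)).submatrix e e).det :=
        (Matrix.det_submatrix_equiv_self e _).symm
    _ = _ := by rw [this, Matrix.det_fromBlocks_zero₂₁]; simp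

lemma det_minor_ne_zero (G : SimpleGraph V) [DecidableRel G.Adj] (hG : G.Connected) (u : V) :
    ((G.lapMatrix ℝ).submatrix
        (fun w : {w : V // w ≠ u} => (w : V)) (fun w : {w : V // w ≠ u} => (w : V))).det ≠ 0 := by
  set M := (G.lapMatrix ℝ).submatrix
      (fun w : {w : V // w ≠ u} => (w : V)) (fun w : {w : V // w ≠ u} => (w : V)) with hM
  intro hdet
  obtain ⟨y, hy0, hy⟩ := (Matrix.exists_mulVec_eq_zero_iff).2 hdet
  -- extend y by 0 at u
  set x : V → ℝ := fun w => if h : w = u then 0 else y ⟨w, h⟩ with hx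
  have hxu : x u = 0 := by simp [hx]
  have hsum : ∀ (f : V → ℝ), ∑ z : V, f z = (∑ z : {w : V // w ≠ u}, f z) + f u := by
    intro f
    rw [← Finset.sum_subtype (Finset.univ.erase u) (by simp) f]
    rw [Finset.sum_erase_add _ _ (Finset.mem_univ u)]
  have hLx : ∀ w : V, w ≠ u → ((G.lapMatrix ℝ) *ᵥ x) w = 0 := by
    intro w hw
    have h0 : (M *ᵥ y) ⟨w, hw⟩ = 0 := by rw [hy]; rfl
    rw [Matrix.mulVec, dotProduct] at h0 ⊢
    rw [hsum fun z => G.lapMatrix ℝ w z * x z]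
    rw [hxu, mul_zero, add_zero]
    rw [← h0]
    apply Finset.sum_congr rfl
    intro z _
    simp [hM, hx, z.2]
  have hform : Matrix.toLinearMap₂' ℝ (G.lapMatrix ℝ) x x = 0 := by
    rw [Matrix.toLinearMap₂'_apply', dotProduct]
    rw [hsum fun z => x z * ((G.lapMatrix ℝ) *ᵥ x) z]
    rw [hxu, zero_mul, add_zero]
    apply Finset.sum_eq_zero
    intro z _
    rw [hLx z z.2, mul_zero]
  have hconst := (G.lapMatrix_toLinearMap₂'_apply'_eq_zero_iff_forall_reachable x).1 hform
  apply hy0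
  funext w
  have := hconst w u (hG.preconnected w u)
  rw [hxu] at this
  have : x (w : V) = 0 := this
  rw [hx] at this
  simpa [w.2] using this

/-- Main tool: if `x` is a potential (grounded at `u`, unit current into `v`), then
`effRes G u v = x v`. -/
lemma effRes_eq_potential (G : SimpleGraph V) [DecidableRel G.Adj] (hG : G.Connected)
    (u v : V) (huv : u ≠ v) (x : V → ℝ) (hxu : x u = 0)
    (hx : ∀ w, w ≠ u → ((G.lapMatrix ℝ) *ᵥ x) w = if w = v then 1 else 0) :
    effRes G u v = x v := by
  rw [effRes_def, if_neg huv]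
  set M := (G.lapMatrix ℝ).submatrix
      (fun w : {w : V // w ≠ u} => (w : V)) (fun w : {w : V // w ≠ u} => (w : V)) with hMdef
  have hdet := det_minor_ne_zero G hG u
  rw [← hMdef] at hdet
  set v' : {w : V // w ≠ u} := ⟨v, Ne.symm huv⟩ with hv'
  -- numerator equals adjugate M v' v'
  have hnum : ((G.lapMatrix ℝ).submatrix
        (fun w : {w : V // w ≠ u ∧ w ≠ v} => (w : V)) (fun w : {w : V // w ≠ u ∧ w ≠ v} => (w : V))).det
      = M.adjugate v' v' := by
    rw [Matrix.adjugate_apply, det_updateRow_single]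
    let e : {w : V // w ≠ u ∧ w ≠ v} ≃ {w : {w : V // w ≠ u} // w ≠ v'} :=
      { toFun := fun w => ⟨⟨w, w.2.1⟩, by simp [hv', Subtype.ext_iff]; exact w.2.2⟩
        invFun := fun w => ⟨(w : V), ⟨(w : {w : V // w ≠ u}).2, by
          simpa [hv', Subtype.ext_iff] using w.2⟩⟩
        left_inv := fun w => rfl
        right_inv := fun w => rfl }
    rw [← Matrix.det_submatrix_equiv_self e]
    rfl
  -- y = restriction of x solves M y = single v' 1
  set y : {w : V // w ≠ u} → ℝ := fun w => x w with hy
  have hMy : M *ᵥ y = Pi.single v' 1 := by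
    funext w
    have h1 := hx w w.2
    rw [Matrix.mulVec, dotProduct] at h1 ⊢
    have hsum : ∀ (f : V → ℝ), ∑ z : V, f z = (∑ z : {w : V // w ≠ u}, f z) + f u := by
      intro f
      rw [← Finset.sum_subtype (Finset.univ.erase u) (by simp) f]
      rw [Finset.sum_erase_add _ _ (Finset.mem_univ u)]
    rw [hsum (fun z => G.lapMatrix ℝ w z * x z), hxu, mul_zero, add_zero] at h1
    rw [show (∑ z : {w : V // w ≠ u}, M w z * y z)
        = ∑ z : {w : V // w ≠ u}, G.lapMatrix ℝ w z * x z from rfl, h1]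
    simp [Pi.single_apply, hv', Subtype.ext_iff]
  -- conclude
  have hunit : IsUnit M.det := isUnit_iff_ne_zero.2 hdet
  have hinv : M⁻¹ * M = 1 := Matrix.nonsing_inv_mul M hunit
  have hyv : y = M⁻¹ *ᵥ Pi.single v' 1 := by
    rw [← hMy, Matrix.mulVec_mulVec, hinv, Matrix.one_mulVec]
  have : x v = M⁻¹ v' v' := by
    have := congrFun hyv v'
    rw [Matrix.mulVec_single] at this
    simpa [hy] using this
  rw [this, Matrix.inv_def, Ring.inverse_eq_inv]
  rw [hnum]
  simp [div_eq_inv_mul]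


end generic


noncomputable def pot (n k t : ℕ) : ℝ :=
  if t ≤ k then (t : ℝ) * ((n : ℝ) - k) / n else (k : ℝ) * ((n : ℝ) - t) / n

lemma pot_zero (n k : ℕ) : pot n k 0 = 0 := by simp [pot]

lemma pot_n (n k : ℕ) (hk : k ≤ n) : pot n k n = 0 := by
  unfold pot
  split
  · have : (k : ℝ) = n := by
      have : k = n := by omega
      exact_mod_cast this
    rw [this]; ring
  · ring

lemma pot_self (n k : ℕ) : pot n k k = (k : ℝ) * ((n : ℝ) - k) / n := by
  simp [pot]

lemma pot_lap (n k t : ℕ) (hn : 1 ≤ n) (hk1 : 1 ≤ k) (hk : k ≤ n - 1)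
    (ht1 : 1 ≤ t) (ht : t ≤ n - 1) :
    2 * pot n k t - pot n k (t - 1) - pot n k (t + 1) = if t = k then 1 else 0 := by
  have hn0 : (n : ℝ) ≠ 0 := Nat.cast_ne_zero.2 (by omega)
  have hcast : ((t - 1 : ℕ) : ℝ) = (t : ℝ) - 1 := by
    push_cast [Nat.cast_sub ht1]; ring
  rcases lt_trichotomy t k with hlt | heq | hgt
  · rw [if_neg (by omega)]
    unfold pot
    rw [if_pos (by omega), if_pos (by omega), if_pos (by omega), hcast]
    push_cast
    field_simp
    ring
  · subst heq
    rw [if_pos rfl]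
    unfold pot
    rw [if_pos le_rfl, if_pos (by omega), if_neg (by omega), hcast]
    push_cast
    field_simp
    ring
  · rw [if_neg (by omega)]
    by_cases hb : t - 1 ≤ k
    · have htk : t = k + 1 := by omega
      subst htk
      unfold pot
      rw [if_neg (by omega), if_pos hb, if_neg (by omega), hcast]
      push_cast
      field_simp
      ring
    · unfold pot
      rw [if_neg (by omega), if_neg hb, if_neg (by omega), hcast]
      push_cast
      field_simp
      ring

lemma pot_lap0 (n k : ℕ) (hn : 2 ≤ n) (hk1 : 1 ≤ k) (hk : k ≤ n - 1) :
    2 * pot n k 0 - pot n k 1 - pot n k (n - 1) = -1 := by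
  have hn0 : (n : ℝ) ≠ 0 := Nat.cast_ne_zero.2 (by omega)
  have hcast : ((n - 1 : ℕ) : ℝ) = (n : ℝ) - 1 := by
    push_cast [Nat.cast_sub (by omega : 1 ≤ n)]; ring
  rw [pot_zero]
  unfold pot
  by_cases hb : n - 1 ≤ k
  · have : k = n - 1 := by omega
    subst this
    rw [if_pos hk1, if_pos le_rfl, hcast]
    push_cast
    field_simp
    try ring
  · rw [if_pos hk1, if_neg hb, hcast]
    push_cast
    field_simp
    try ring

/-- Combined step lemma for the cycle Laplacian at an interior relative position. -/
lemma pot_step (n k t a b : ℕ) (hn : 3 ≤ n) (hk1 : 1 ≤ k) (hk : k ≤ n - 1)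
    (ht1 : 1 ≤ t) (ht : t ≤ n - 1)
    (ha : a = t - 1) (hb : b = if t = n - 1 then 0 else t + 1) :
    2 * pot n k t - pot n k a - pot n k b = if t = k then 1 else 0 := by
  subst ha
  by_cases htop : t = n - 1
  · have hb' : b = 0 := by rw [hb, if_pos htop]
    subst hb'
    have : pot n k 0 = pot n k (t + 1) := by
      rw [pot_zero, htop, show n - 1 + 1 = n by omega, pot_n n k (by omega)]
    rw [this]
    exact pot_lap n k t (by omega) hk1 hk ht1 ht
  · rw [if_neg htop] at hb
    subst hb
    exact pot_lap n k t (by omega) hk1 hk ht1 ht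

section finlem
variable {h : ℕ}

lemma mod_small {a : ℕ} (ha : a < h) : a % h = a := Nat.mod_eq_of_lt ha

lemma mod_big {a : ℕ} (h1 : h ≤ a) (h2 : a < 2 * h) : a % h = a - h := by
  rw [Nat.mod_eq_sub_mod h1, Nat.mod_eq_of_lt (by omega)]

lemma fin_sub_val (hh : 1 ≤ h) (u v : Fin h) :
    (v - u).val = if u.val ≤ v.val then v.val - u.val else v.val + h - u.val := by
  rw [Fin.sub_def]
  simp only []
  have hu := u.2; have hv := v.2
  by_cases hc : u.val ≤ v.val
  · rw [if_pos hc, mod_big (by omega) (by omega)]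
    omega
  · rw [if_neg hc, mod_small (by omega)]
    omega

lemma fin_pred_val [NeZero h] (hh : 2 ≤ h) (x : Fin h) (hx : x.val ≠ 0) :
    (x - 1).val = x.val - 1 := by
  have h1 : (1 : Fin h).val = 1 := by rw [Fin.val_one', Nat.mod_eq_of_lt (by omega)]
  rw [fin_sub_val (by omega), h1, if_pos (by omega)]

lemma fin_succ_val [NeZero h] (hh : 2 ≤ h) (x : Fin h) :
    (x + 1).val = if x.val = h - 1 then 0 else x.val + 1 := by
  have h1 : (1 : Fin h).val = 1 := by rw [Fin.val_one', Nat.mod_eq_of_lt (by omega)]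
  rw [Fin.add_def]
  simp only [h1]
  have hx := x.2
  by_cases hc : x.val = h - 1
  · rw [if_pos hc, mod_big (by omega) (by omega)]; omega
  · rw [if_neg hc, mod_small (by omega)]

lemma fin_sub_eq_zero [NeZero h] {u v : Fin h} : v - u = 0 ↔ v = u :=
  sub_eq_zero

end finlem

section degRes

lemma degRes_def {V : Type*} [Fintype V] [DecidableEq V] (G : SimpleGraph V)
    [DecidableRel G.Adj] :
    degRes G = (1 / 2) * ∑ u : V, ∑ v : V,
      ((G.degree u : ℝ) + (G.degree v : ℝ)) * effRes G u v := by
  unfold degRes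
  congr!
end degRes

section cyc
open SimpleGraph

lemma cycle_effRes (m : ℕ) (u v : Fin (m + 4)) :
    effRes (cycleGraph (m + 4)) u v = pot (m + 4) ((v - u).val) ((v - u).val) := by
  have hh : (4 : ℕ) ≤ m + 4 := by omega
  haveI : NeZero (m + 4) := ⟨by omega⟩
  by_cases huv : u = v
  · subst huv
    rw [sub_self]
    rw [effRes_def, if_pos rfl]
    simp [pot_zero]
  · set k := (v - u).val with hk
    have hk1 : 1 ≤ k := by
      rcases Nat.eq_zero_or_pos k with h0 | h1
      · exfalso
        have hz : v - u = 0 := Fin.ext (by simpa [hk] using h0)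
        exact huv ((fin_sub_eq_zero (h := m+4)).1 hz).symm
      · exact h1
    have hkle : k ≤ m + 4 - 1 := by have := (v - u).2; omega
    set x : Fin (m + 4) → ℝ := fun w => pot (m + 4) k ((w - u).val) with hxdef
    have hxu : x u = 0 := by
      simp only [hxdef, sub_self, Fin.val_zero, pot_zero]
    have hx : ∀ w, w ≠ u → ((cycleGraph (m + 4)).lapMatrix ℝ *ᵥ x) w
        = if w = v then 1 else 0 := by
      intro w hw
      rw [lapMatrix_mulVec_apply]
      have hdeg : (cycleGraph (m + 4)).degree w = 2 := cycleGraph_degree_three_le (n := m + 1)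
      have hNF : (cycleGraph (m + 4)).neighborFinset w = {w - 1, w + 1} :=
        cycleGraph_neighborFinset (n := m + 2)
      set t := (w - u).val with ht
      have ht1 : 1 ≤ t := by
        rcases Nat.eq_zero_or_pos t with h0 | h1
        · have hz : w - u = 0 := Fin.ext (by simpa [ht] using h0)
          exact absurd ((fin_sub_eq_zero (h := m+4)).1 hz) hw
        · exact h1
      have htle : t ≤ m + 4 - 1 := by have := (w - u).2; omega
      have hxm : x (w - 1) = pot (m + 4) k (t - 1) := by
        simp only [hxdef]
        congr 1
        rw [sub_right_comm]
        exact fin_pred_val (by omega) (w - u) (by omega)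
      have hxp : x (w + 1) = pot (m + 4) k (if t = m + 4 - 1 then 0 else t + 1) := by
        simp only [hxdef]
        congr 1
        rw [show w + 1 - u = (w - u) + 1 from (sub_add_eq_add_sub _ _ _).symm]
        exact fin_succ_val (by omega) (w - u)
      have hne : w - 1 ≠ w + 1 := by
        intro e
        have e' : w - 1 - u = w + 1 - u := by rw [e]
        have := congrArg Fin.val e'
        rw [sub_right_comm, fin_pred_val (by omega) (w - u) (by omega), ← ht,
          show w + 1 - u = (w - u) + 1 from (sub_add_eq_add_sub _ _ _).symm,
          fin_succ_val (by omega) (w - u), ← ht] at this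
        split at this <;> omega
      rw [hNF, Finset.sum_pair hne, hdeg, hxm, hxp]
      have hwv : (w = v) ↔ (t = k) := by
        constructor
        · intro e; rw [ht, hk, e]
        · intro e
          have : w - u = v - u := Fin.ext (by rw [← ht, ← hk, e])
          exact sub_left_injective this
      have := pot_step (m + 4) k t (t - 1) (if t = m + 4 - 1 then 0 else t + 1)
        (by omega) hk1 hkle ht1 htle rfl rfl
      simp only [show m + 4 - 1 = m + 3 from rfl] at this hxp ⊢
      push_cast
      rw [show (2:ℝ) * x w - (pot (m+4) k (t-1) + pot (m+4) k (if t = m + 3 then 0 else t + 1))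
          = 2 * pot (m+4) k t - pot (m+4) k (t-1) - pot (m+4) k (if t = m + 3 then 0 else t + 1) by
        simp only [hxdef, ← ht]; ring]
      rw [this]
      simp only [hwv]
    rw [effRes_eq_potential (cycleGraph (m + 4)) (cycleGraph_connected (n := m + 3))
        u v huv x hxu hx]

end cyc

section sums

lemma sum_range_cast (n : ℕ) : ∑ k ∈ Finset.range n, (k : ℝ) = n * (n - 1) / 2 := by
  induction n with
  | zero => simp
  | succ n ih => rw [Finset.sum_range_succ, ih]; push_cast; ring

lemma sum_range_sq_cast (n : ℕ) :
    ∑ k ∈ Finset.range n, (k : ℝ) ^ 2 = n * (n - 1) * (2 * n - 1) / 6 := by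
  induction n with
  | zero => simp
  | succ n ih => rw [Finset.sum_range_succ, ih]; push_cast; ring

lemma sum_k_nk (n : ℕ) :
    ∑ k ∈ Finset.range n, (k : ℝ) * ((n : ℝ) - k) = n * (n - 1) * (n + 1) / 6 := by
  have h : ∀ k ∈ Finset.range n, (k : ℝ) * ((n : ℝ) - k) = (n : ℝ) * k - (k : ℝ) ^ 2 :=
    fun k _ => by ring
  rw [Finset.sum_congr rfl h, Finset.sum_sub_distrib, ← Finset.mul_sum, sum_range_cast,
    sum_range_sq_cast]
  ring

lemma sum_pot_self (n : ℕ) (hn : 1 ≤ n) :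
    ∑ k ∈ Finset.range n, pot n k k = ((n : ℝ) ^ 2 - 1) / 6 := by
  have hn0 : (n : ℝ) ≠ 0 := Nat.cast_ne_zero.2 (by omega)
  have h : ∀ k ∈ Finset.range n, pot n k k = (k : ℝ) * ((n : ℝ) - k) / n :=
    fun k _ => pot_self n k
  rw [Finset.sum_congr rfl h, ← Finset.sum_div, sum_k_nk]
  field_simp
  ring

/-- sum over Fin N of `pot N (d-c) (d-c)` over d equals the range sum. -/
lemma fin_sum_pot (N : ℕ) [NeZero N] (c : Fin N) :
    ∑ d : Fin N, pot N ((d - c).val) ((d - c).val) = ∑ k ∈ Finset.range N, pot N k k := by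
  rw [← Fin.sum_univ_eq_sum_range (fun k => pot N k k)]
  exact Fintype.sum_equiv (Equiv.subRight c) _ _ (fun d => rfl)

end sums

section cycdeg
open SimpleGraph

lemma degRes_cycle (m : ℕ) :
    degRes (cycleGraph (m + 4)) = (((m + 4 : ℕ) : ℝ) ^ 3 - ((m + 4 : ℕ) : ℝ)) / 3 := by
  haveI : NeZero (m + 4) := ⟨by omega⟩
  rw [degRes_def]
  have hdeg : ∀ w : Fin (m + 4), ((cycleGraph (m + 4)).degree w : ℝ) = 2 := fun w => by
    rw [cycleGraph_degree_three_le (n := m + 1)]; norm_num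
  have hS := sum_pot_self (m + 4) (by omega)
  have hinner : ∀ u : Fin (m + 4),
      ∑ v : Fin (m + 4), (((cycleGraph (m + 4)).degree u : ℝ)
        + ((cycleGraph (m + 4)).degree v : ℝ)) * effRes (cycleGraph (m + 4)) u v
      = 4 * (((m + 4 : ℕ) : ℝ) ^ 2 - 1) / 6 := by
    intro u
    have : ∀ v : Fin (m + 4), (((cycleGraph (m + 4)).degree u : ℝ)
        + ((cycleGraph (m + 4)).degree v : ℝ)) * effRes (cycleGraph (m + 4)) u v
        = 4 * pot (m + 4) ((v - u).val) ((v - u).val) := by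
      intro v
      rw [hdeg, hdeg, cycle_effRes]
      norm_num
    rw [Finset.sum_congr rfl (fun v _ => this v), ← Finset.mul_sum, fin_sum_pot, hS]
    ring
  rw [Finset.sum_congr rfl (fun u _ => hinner u), Finset.sum_const, Finset.card_univ,
    Fintype.card_fin, nsmul_eq_mul]
  have hn0 : ((m + 4 : ℕ) : ℝ) ≠ 0 := Nat.cast_ne_zero.2 (by omega)
  field_simp
  ring
end cycdeg


section cwp
open SimpleGraph
variable {m : ℕ}

lemma pot_k0 (n t : ℕ) : pot n 0 t = 0 := by
  unfold pot
  split
  · have ht : t = 0 := by omega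
    subst ht; simp
  · simp

lemma pot_symm (n k : ℕ) (hk : k ≤ n) : pot n (n - k) (n - k) = pot n k k := by
  rw [pot_self, pot_self]
  push_cast [Nat.cast_sub hk]
  ring

def projP (m : ℕ) (w : Fin (m + 4)) : Fin (m + 3) :=
  if h : w.val = m + 3 then ⟨0, by omega⟩ else ⟨w.val, by have := w.2; omega⟩

lemma projP_castSucc (q : Fin (m + 3)) : projP m q.castSucc = q := by
  unfold projP
  rw [dif_neg (by have := q.2; simp only [Fin.coe_castSucc]; omega)]
  exact Fin.ext (by simp)

lemma projP_last : projP m (Fin.last (m + 3)) = 0 := by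
  unfold projP
  rw [dif_pos (by simp)]
  rfl

lemma exists_castSucc {w : Fin (m + 4)} (hw : w ≠ Fin.last (m + 3)) :
    ∃ q : Fin (m + 3), w = q.castSucc := by
  refine ⟨⟨w.val, ?_⟩, Fin.ext (by simp)⟩
  have h1 := w.2
  have h2 : w.val ≠ m + 3 := fun e => hw (Fin.ext (by simp [e]))
  omega

lemma cwp_adj (a b : Fin (m + 4)) :
    (cycleWithPendent (m + 4)).Adj a b ↔ a.val ≠ b.val ∧
      ((b.val = a.val + 1 ∧ b.val ≤ m + 2) ∨ (a.val = 0 ∧ b.val = m + 2) ∨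
        (a.val = 0 ∧ b.val = m + 3) ∨ (a.val = b.val + 1 ∧ a.val ≤ m + 2) ∨
        (b.val = 0 ∧ a.val = m + 2) ∨ (b.val = 0 ∧ a.val = m + 3)) := by
  rw [cycleWithPendent, SimpleGraph.fromRel_adj]
  simp only [ne_eq, Fin.ext_iff]
  constructor
  · rintro ⟨h1, h2⟩
    exact ⟨h1, by omega⟩
  · rintro ⟨h1, h2⟩
    exact ⟨h1, by omega⟩

lemma nf_last [DecidableRel (cycleWithPendent (m + 4)).Adj] :
    (cycleWithPendent (m + 4)).neighborFinset (Fin.last (m + 3))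
      = {(0 : Fin (m + 3)).castSucc} := by
  ext z
  have hz := z.2
  rw [mem_neighborFinset, cwp_adj]
  simp only [Finset.mem_singleton, Fin.ext_iff, Fin.coe_castSucc, Fin.val_last, Fin.val_zero,
    and_true, true_and, and_false, false_and]
  omega

lemma nf_cs_zero [DecidableRel (cycleWithPendent (m + 4)).Adj] :
    (cycleWithPendent (m + 4)).neighborFinset ((0 : Fin (m + 3)).castSucc)
      = {((0 : Fin (m + 3)) + 1).castSucc, ((0 : Fin (m + 3)) - 1).castSucc,
          Fin.last (m + 3)} := by
  haveI : NeZero (m + 3) := ⟨by omega⟩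
  have h1 : ((0 : Fin (m + 3)) + 1).val = 1 := by
    rw [fin_succ_val (by omega)]
    simp
  have h2 : ((0 : Fin (m + 3)) - 1).val = m + 2 := by
    have h1' : (1 : Fin (m + 3)).val = 1 := by
      rw [Fin.val_one', Nat.mod_eq_of_lt (by omega)]
    rw [fin_sub_val (by omega), h1']
    simp
  ext z
  have hz := z.2
  rw [mem_neighborFinset, cwp_adj]
  simp only [Finset.mem_insert, Finset.mem_singleton, Fin.ext_iff, Fin.coe_castSucc,
    Fin.val_last, Fin.val_zero, h1, h2, and_true, true_and, and_false, false_and]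
  omega

lemma nf_cs [DecidableRel (cycleWithPendent (m + 4)).Adj] (q : Fin (m + 3)) (hq : q ≠ 0) :
    (cycleWithPendent (m + 4)).neighborFinset q.castSucc
      = {(q - 1).castSucc, (q + 1).castSucc} := by
  haveI : NeZero (m + 3) := ⟨by omega⟩
  have hq0 : q.val ≠ 0 := fun e => hq (Fin.ext (by simpa using e))
  have h1 : (q - 1).val = q.val - 1 := fin_pred_val (by omega) q hq0
  have h2 : (q + 1).val = if q.val = m + 2 then 0 else q.val + 1 := fin_succ_val (by omega) q
  have hq2 := q.2
  by_cases hqm : q.val = m + 2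
  · rw [if_pos hqm] at h2
    ext z
    have hz := z.2
    rw [mem_neighborFinset, cwp_adj]
    simp only [Finset.mem_insert, Finset.mem_singleton, Fin.ext_iff, Fin.coe_castSucc, h1, h2,
      and_true, true_and, and_false, false_and]
    omega
  · rw [if_neg hqm] at h2
    ext z
    have hz := z.2
    rw [mem_neighborFinset, cwp_adj]
    simp only [Finset.mem_insert, Finset.mem_singleton, Fin.ext_iff, Fin.coe_castSucc, h1, h2,
      and_true, true_and, and_false, false_and]
    omega

lemma deg_last [DecidableRel (cycleWithPendent (m + 4)).Adj] :
    (cycleWithPendent (m + 4)).degree (Fin.last (m + 3)) = 1 := by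
  rw [← card_neighborFinset_eq_degree, nf_last]
  simp

lemma deg_cs_zero [DecidableRel (cycleWithPendent (m + 4)).Adj] :
    (cycleWithPendent (m + 4)).degree ((0 : Fin (m + 3)).castSucc) = 3 := by
  haveI : NeZero (m + 3) := ⟨by omega⟩
  have h1 : ((0 : Fin (m + 3)) + 1).val = 1 := by
    rw [fin_succ_val (by omega)]; simp
  have h2 : ((0 : Fin (m + 3)) - 1).val = m + 2 := by
    have h1' : (1 : Fin (m + 3)).val = 1 := by
      rw [Fin.val_one', Nat.mod_eq_of_lt (by omega)]
    rw [fin_sub_val (by omega), h1']; simp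
  rw [← card_neighborFinset_eq_degree, nf_cs_zero]
  rw [Finset.card_insert_of_notMem, Finset.card_insert_of_notMem, Finset.card_singleton]
  · simp only [Finset.mem_singleton, Fin.ext_iff, Fin.coe_castSucc, Fin.val_last, h2]
    omega
  · simp only [Finset.mem_insert, Finset.mem_singleton, Fin.ext_iff, Fin.coe_castSucc,
      Fin.val_last, h1, h2]
    omega

lemma deg_cs [DecidableRel (cycleWithPendent (m + 4)).Adj] (q : Fin (m + 3)) (hq : q ≠ 0) :
    (cycleWithPendent (m + 4)).degree q.castSucc = 2 := by
  haveI : NeZero (m + 3) := ⟨by omega⟩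
  have hq0 : q.val ≠ 0 := fun e => hq (Fin.ext (by simpa using e))
  have h1 : (q - 1).val = q.val - 1 := fin_pred_val (by omega) q hq0
  have h2 : (q + 1).val = if q.val = m + 2 then 0 else q.val + 1 := fin_succ_val (by omega) q
  have hq2 := q.2
  rw [← card_neighborFinset_eq_degree, nf_cs q hq, Finset.card_pair]
  intro e
  rw [Fin.ext_iff] at e
  rw [Fin.coe_castSucc, Fin.coe_castSucc, h1, h2] at e
  split at e <;> omega

lemma cwp_connected : (cycleWithPendent (m + 4)).Connected := by
  rw [connected_iff]
  refine ⟨?_, ⟨⟨0, by omega⟩⟩⟩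
  have key : ∀ μ : ℕ, ∀ hμ : μ < m + 4,
      (cycleWithPendent (m + 4)).Reachable ⟨0, by omega⟩ ⟨μ, hμ⟩ := by
    intro μ
    induction μ using Nat.strong_induction_on with
    | _ μ ih =>
      intro hμ
      rcases Nat.eq_zero_or_pos μ with h0 | h1
      · subst h0; rfl
      · by_cases hp : μ = m + 3
        · refine Adj.reachable ?_
          rw [cwp_adj]
          simp only [Fin.ext_iff, and_true, true_and, and_false, false_and]
          omega
        · refine (ih (μ - 1) (by omega) (by omega)).trans (Adj.reachable ?_)
          rw [cwp_adj]
          simp only [Fin.ext_iff, and_true, true_and, and_false, false_and]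
          omega
  intro a b
  have ha := key a.val a.2
  have hb := key b.val b.2
  rw [Fin.eta] at ha hb
  exact ha.symm.trans hb

end cwp

section cwpres
open SimpleGraph
variable {m : ℕ}

lemma sub_val_pos {n : ℕ} [NeZero n] (hn : 2 ≤ n) {q i : Fin n} (hqi : q ≠ i) :
    1 ≤ (q - i).val := by
  rcases Nat.eq_zero_or_pos (q - i).val with h0 | h1
  · exact absurd ((fin_sub_eq_zero (h := n)).1 (Fin.ext (by simpa using h0))) hqi
  · exact h1

lemma hsub_pred {n : ℕ} [NeZero n] (hn : 2 ≤ n) {q i : Fin n} (hqi : q ≠ i) :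
    ((q - 1) - i).val = (q - i).val - 1 := by
  rw [sub_right_comm]
  exact fin_pred_val hn (q - i) (by have := sub_val_pos hn hqi; omega)

lemma hsub_succ {n : ℕ} [NeZero n] (hn : 2 ≤ n) (q i : Fin n) :
    ((q + 1) - i).val = if (q - i).val = n - 1 then 0 else (q - i).val + 1 := by
  rw [show q + 1 - i = (q - i) + 1 from (sub_add_eq_add_sub _ _ _).symm]
  exact fin_succ_val hn (q - i)

lemma cwp_effRes_cyc (i j : Fin (m + 3)) :
    effRes (cycleWithPendent (m + 4)) i.castSucc j.castSucc
      = pot (m + 3) ((j - i).val) ((j - i).val) := by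
  classical
  haveI : NeZero (m + 3) := ⟨by omega⟩
  by_cases hij : i = j
  · subst hij
    rw [sub_self, effRes_def, if_pos rfl]
    simp [pot_zero]
  · have huv : i.castSucc ≠ j.castSucc := fun e => hij (Fin.castSucc_injective _ e)
    set k := (j - i).val with hk
    have hk1 : 1 ≤ k := sub_val_pos (by omega) (Ne.symm hij)
    have hkle : k ≤ m + 2 := by have := (j - i).2; omega
    set x : Fin (m + 4) → ℝ := fun w => pot (m + 3) k ((projP m w - i).val) with hxdef
    have hxu : x i.castSucc = 0 := by
      simp only [hxdef, projP_castSucc, sub_self, Fin.val_zero, pot_zero]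
    have hxcs : ∀ q : Fin (m + 3), x q.castSucc = pot (m + 3) k ((q - i).val) := by
      intro q; simp only [hxdef, projP_castSucc]
    have hxl : x (Fin.last (m + 3)) = pot (m + 3) k (((0 : Fin (m + 3)) - i).val) := by
      simp only [hxdef, projP_last]
    have hx : ∀ w, w ≠ i.castSucc →
        ((cycleWithPendent (m + 4)).lapMatrix ℝ *ᵥ x) w = if w = j.castSucc then 1 else 0 := by
      intro w hw
      rw [lapMatrix_mulVec_apply]
      by_cases hwl : w = Fin.last (m + 3)
      · subst hwl
        rw [deg_last, nf_last, Finset.sum_singleton,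
          if_neg (Ne.symm (Fin.castSucc_lt_last j).ne)]
        rw [hxl, hxcs]
        push_cast
        ring
      · obtain ⟨q, rfl⟩ := exists_castSucc hwl
        have hqi : q ≠ i := fun e => hw (by rw [e])
        set t := (q - i).val with htdef
        have ht1 : 1 ≤ t := sub_val_pos (by omega) hqi
        have htle : t ≤ m + 2 := by have := (q - i).2; omega
        have hδ : (q.castSucc = j.castSucc) ↔ (t = k) := by
          constructor
          · intro e; rw [htdef, hk, Fin.castSucc_injective _ e]
          · intro e
            have : q - i = j - i := Fin.ext (by rw [← htdef, ← hk, e])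
            rw [sub_left_injective this]
        have hstep := pot_step (m + 3) k t (t - 1) (if t = m + 2 then 0 else t + 1)
          (by omega) hk1 hkle ht1 htle rfl rfl
        have hxm : x ((q - 1)).castSucc = pot (m + 3) k (t - 1) := by
          rw [hxcs, hsub_pred (by omega) hqi]
        have hxp : x ((q + 1)).castSucc = pot (m + 3) k (if t = m + 2 then 0 else t + 1) := by
          rw [hxcs, hsub_succ (by omega) q i, ← htdef]
          norm_num
        by_cases hq0 : q = 0
        · subst hq0
          have hne1 : ((0 : Fin (m + 3)) + 1).castSucc ∉
              ({((0 : Fin (m + 3)) - 1).castSucc, Fin.last (m + 3)} :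
                Finset (Fin (m + 4))) := by
            have e1 : ((0 : Fin (m + 3)) + 1).val = 1 := by
              rw [fin_succ_val (by omega)]; simp
            have e2 : ((0 : Fin (m + 3)) - 1).val = m + 2 := by
              have h1' : (1 : Fin (m + 3)).val = 1 := by
                rw [Fin.val_one', Nat.mod_eq_of_lt (by omega)]
              rw [fin_sub_val (by omega), h1']; simp
            simp only [Finset.mem_insert, Finset.mem_singleton, Fin.ext_iff, Fin.coe_castSucc,
              Fin.val_last, e1, e2]
            omega
          have hne2 : ((0 : Fin (m + 3)) - 1).castSucc ∉
              ({Fin.last (m + 3)} : Finset (Fin (m + 4))) := by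
            simp only [Finset.mem_singleton]
            exact (Fin.castSucc_lt_last _).ne
          rw [deg_cs_zero, nf_cs_zero, Finset.sum_insert hne1, Finset.sum_insert hne2,
            Finset.sum_singleton]
          have hxl' : x (Fin.last (m + 3)) = pot (m + 3) k t := by rw [hxl]
          rw [hxcs, hxm, hxp, hxl']
          simp only [hδ]
          rw [← hstep]
          push_cast
          ring
        · have hne : ((q - 1)).castSucc ≠ ((q + 1)).castSucc := by
            intro e
            have e' := congrArg (fun z : Fin (m + 4) => ((projP m z) - i).val) e
            simp only [projP_castSucc] at e'
            rw [hsub_pred (by omega) hqi, hsub_succ (by omega) q i] at e'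
            split at e' <;> omega
          rw [deg_cs q hq0, nf_cs q hq0, Finset.sum_pair hne]
          rw [hxcs, hxm, hxp]
          simp only [hδ]
          rw [← hstep]
          push_cast
          ring
    rw [effRes_eq_potential _ cwp_connected _ _ huv x hxu hx, hxcs]

end cwpres

section cwpres2
open SimpleGraph
variable {m : ℕ}

lemma cwp_effRes_pr (i : Fin (m + 3)) :
    effRes (cycleWithPendent (m + 4)) i.castSucc (Fin.last (m + 3))
      = 1 + pot (m + 3) (((0 : Fin (m + 3)) - i).val) (((0 : Fin (m + 3)) - i).val) := by
  classical
  haveI : NeZero (m + 3) := ⟨by omega⟩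
  have huv : i.castSucc ≠ Fin.last (m + 3) := (Fin.castSucc_lt_last i).ne
  set k := ((0 : Fin (m + 3)) - i).val with hk
  have hkle : k ≤ m + 2 := by have := ((0 : Fin (m + 3)) - i).2; omega
  set x : Fin (m + 4) → ℝ := fun w =>
    pot (m + 3) k ((projP m w - i).val) + (if w.val = m + 3 then 1 else 0) with hxdef
  have hxcs : ∀ q : Fin (m + 3), x q.castSucc = pot (m + 3) k ((q - i).val) := by
    intro q
    simp only [hxdef, projP_castSucc, Fin.coe_castSucc]
    rw [if_neg (by have := q.2; omega), add_zero]
  have hxl : x (Fin.last (m + 3)) = pot (m + 3) k k + 1 := by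
    simp only [hxdef, projP_last, Fin.val_last, ← hk, if_pos rfl]
    norm_num
  have hxu : x i.castSucc = 0 := by
    rw [hxcs, sub_self, Fin.val_zero, pot_zero]
  have hx : ∀ w, w ≠ i.castSucc →
      ((cycleWithPendent (m + 4)).lapMatrix ℝ *ᵥ x) w
        = if w = Fin.last (m + 3) then 1 else 0 := by
    intro w hw
    rw [lapMatrix_mulVec_apply]
    by_cases hwl : w = Fin.last (m + 3)
    · subst hwl
      rw [deg_last, nf_last, Finset.sum_singleton, if_pos rfl, hxl, hxcs]
      push_cast
      ring
    · obtain ⟨q, rfl⟩ := exists_castSucc hwl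
      have hqi : q ≠ i := fun e => hw (by rw [e])
      rw [if_neg hwl]
      set t := (q - i).val with htdef
      have ht1 : 1 ≤ t := sub_val_pos (by omega) hqi
      have htle : t ≤ m + 2 := by have := (q - i).2; omega
      have htk : (t = k) ↔ (q = 0) := by
        constructor
        · intro e
          have : q - i = 0 - i := Fin.ext (by rw [← htdef, ← hk, e])
          exact sub_left_injective this
        · intro e; rw [htdef, hk, e]
      have hxm : x ((q - 1)).castSucc = pot (m + 3) k (t - 1) := by
        rw [hxcs, hsub_pred (by omega) hqi]
      have hxp : x ((q + 1)).castSucc = pot (m + 3) k (if t = m + 2 then 0 else t + 1) := by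
        rw [hxcs, hsub_succ (by omega) q i, ← htdef]
        norm_num
      by_cases hq0 : q = 0
      · -- here t = k and k ≥ 1
        have htk' : t = k := htk.2 hq0
        have hk1 : 1 ≤ k := by omega
        have hstep := pot_step (m + 3) k t (t - 1) (if t = m + 2 then 0 else t + 1)
          (by omega) hk1 hkle ht1 htle rfl rfl
        subst hq0
        have hne1 : ((0 : Fin (m + 3)) + 1).castSucc ∉
            ({((0 : Fin (m + 3)) - 1).castSucc, Fin.last (m + 3)} :
              Finset (Fin (m + 4))) := by
          have e1 : ((0 : Fin (m + 3)) + 1).val = 1 := by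
            rw [fin_succ_val (by omega)]; simp
          have e2 : ((0 : Fin (m + 3)) - 1).val = m + 2 := by
            have h1' : (1 : Fin (m + 3)).val = 1 := by
              rw [Fin.val_one', Nat.mod_eq_of_lt (by omega)]
            rw [fin_sub_val (by omega), h1']; simp
          simp only [Finset.mem_insert, Finset.mem_singleton, Fin.ext_iff, Fin.coe_castSucc,
            Fin.val_last, e1, e2]
          omega
        have hne2 : ((0 : Fin (m + 3)) - 1).castSucc ∉
            ({Fin.last (m + 3)} : Finset (Fin (m + 4))) := by
          simp only [Finset.mem_singleton]
          exact (Fin.castSucc_lt_last _).ne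
        rw [deg_cs_zero, nf_cs_zero, Finset.sum_insert hne1, Finset.sum_insert hne2,
          Finset.sum_singleton, hxcs, hxm, hxp, hxl]
        rw [if_pos htk'] at hstep
        rw [← htdef, ← htk']
        have : pot (m + 3) k (if t = m + 2 then 0 else t + 1)
            = 2 * pot (m + 3) k t - pot (m + 3) k (t - 1) - 1 := by linarith
        rw [this]
        push_cast
        ring
      · have hne : ((q - 1)).castSucc ≠ ((q + 1)).castSucc := by
          intro e
          have e' := congrArg (fun z : Fin (m + 4) => ((projP m z) - i).val) e
          simp only [projP_castSucc] at e'
          rw [hsub_pred (by omega) hqi, hsub_succ (by omega) q i] at e'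
          split at e' <;> omega
        rw [deg_cs q hq0, nf_cs q hq0, Finset.sum_pair hne, hxcs, hxm, hxp]
        by_cases hk0 : k = 0
        · rw [← htdef]
          simp only [hk0, pot_k0]
          push_cast
          ring
        · have hstep := pot_step (m + 3) k t (t - 1) (if t = m + 2 then 0 else t + 1)
            (by omega) (by omega) hkle ht1 htle rfl rfl
          rw [if_neg (fun e => hq0 (htk.1 e))] at hstep
          rw [← htdef, ← hstep]
          push_cast
          ring
  rw [effRes_eq_potential _ cwp_connected _ _ huv x hxu hx, hxl]
  ring

lemma cwp_effRes_pl (j : Fin (m + 3)) :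
    effRes (cycleWithPendent (m + 4)) (Fin.last (m + 3)) j.castSucc
      = 1 + pot (m + 3) j.val j.val := by
  classical
  haveI : NeZero (m + 3) := ⟨by omega⟩
  have huv : Fin.last (m + 3) ≠ j.castSucc := Ne.symm (Fin.castSucc_lt_last j).ne
  set x : Fin (m + 4) → ℝ := fun w =>
    if w.val = m + 3 then 0 else 1 + pot (m + 3) j.val (projP m w).val with hxdef
  have hxcs : ∀ q : Fin (m + 3), x q.castSucc = 1 + pot (m + 3) j.val q.val := by
    intro q
    simp only [hxdef, Fin.coe_castSucc]
    rw [if_neg (by have := q.2; omega), projP_castSucc]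
  have hxl : x (Fin.last (m + 3)) = 0 := by
    simp only [hxdef, Fin.val_last, if_pos rfl]
    norm_num
  have hx : ∀ w, w ≠ Fin.last (m + 3) →
      ((cycleWithPendent (m + 4)).lapMatrix ℝ *ᵥ x) w
        = if w = j.castSucc then 1 else 0 := by
    intro w hwl
    rw [lapMatrix_mulVec_apply]
    obtain ⟨q, rfl⟩ := exists_castSucc hwl
    have hδ : (q.castSucc = j.castSucc) ↔ (q.val = j.val) := by
      rw [Fin.ext_iff, Fin.coe_castSucc, Fin.coe_castSucc]
    by_cases hq0 : q = 0
    · subst hq0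
      have e1 : ((0 : Fin (m + 3)) + 1).val = 1 := by
        rw [fin_succ_val (by omega)]; simp
      have e2 : ((0 : Fin (m + 3)) - 1).val = m + 2 := by
        have h1' : (1 : Fin (m + 3)).val = 1 := by
          rw [Fin.val_one', Nat.mod_eq_of_lt (by omega)]
        rw [fin_sub_val (by omega), h1']; simp
      have hne1 : ((0 : Fin (m + 3)) + 1).castSucc ∉
          ({((0 : Fin (m + 3)) - 1).castSucc, Fin.last (m + 3)} :
            Finset (Fin (m + 4))) := by
        simp only [Finset.mem_insert, Finset.mem_singleton, Fin.ext_iff, Fin.coe_castSucc,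
          Fin.val_last, e1, e2]
        omega
      have hne2 : ((0 : Fin (m + 3)) - 1).castSucc ∉
          ({Fin.last (m + 3)} : Finset (Fin (m + 4))) := by
        simp only [Finset.mem_singleton]
        exact (Fin.castSucc_lt_last _).ne
      rw [deg_cs_zero, nf_cs_zero, Finset.sum_insert hne1, Finset.sum_insert hne2,
        Finset.sum_singleton, hxcs, hxcs, hxcs, hxl, e1, e2, Fin.val_zero]
      by_cases hj0 : j = 0
      · rw [if_pos (by simp [hδ, hj0])]
        simp only [hj0, Fin.val_zero, pot_k0]
        push_cast
        ring
      · have hj1 : 1 ≤ j.val := by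
          rcases Nat.eq_zero_or_pos j.val with h0 | h1
          · exact absurd (Fin.ext (by simpa using h0)) hj0
          · exact h1
        have hlap0 := pot_lap0 (m + 3) j.val (by omega) hj1 (by have := j.2; omega)
        rw [if_neg (by rw [hδ]; simp only [Fin.val_zero]; omega)]
        have : pot (m + 3) j.val (m + 2) = 2 * pot (m + 3) j.val 0 - pot (m + 3) j.val 1 + 1 := by
          have hm2 : m + 3 - 1 = m + 2 := rfl
          rw [hm2] at hlap0
          linarith
        rw [this, pot_zero]
        push_cast
        ring
    · have hq0' : q.val ≠ 0 := fun e => hq0 (Fin.ext (by simpa using e))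
      set t := q.val with htdef
      have ht1 : 1 ≤ t := by omega
      have htle : t ≤ m + 2 := by have := q.2; omega
      have h1 : (q - 1).val = t - 1 := fin_pred_val (by omega) q hq0'
      have h2 : (q + 1).val = if t = m + 2 then 0 else t + 1 := by
        rw [fin_succ_val (by omega) q]
        rfl
      have hne : ((q - 1)).castSucc ≠ ((q + 1)).castSucc := by
        intro e
        rw [Fin.ext_iff, Fin.coe_castSucc, Fin.coe_castSucc, h1, h2] at e
        split at e <;> omega
      rw [deg_cs q hq0, nf_cs q hq0, Finset.sum_pair hne, hxcs, hxcs, hxcs, h1, h2]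
      by_cases hj0 : j = 0
      · have hrhs : (if q.castSucc = j.castSucc then (1 : ℝ) else 0) = 0 := by
          rw [if_neg]
          rw [hδ, hj0]
          simpa using hq0'
        rw [hrhs]
        simp only [hj0, Fin.val_zero, pot_k0]
        push_cast
        ring
      · have hj1 : 1 ≤ j.val := by
          rcases Nat.eq_zero_or_pos j.val with h0 | h1
          · exact absurd (Fin.ext (by simpa using h0)) hj0
          · exact h1
        have hstep := pot_step (m + 3) j.val t (t - 1) (if t = m + 2 then 0 else t + 1)
          (by omega) hj1 (by have := j.2; omega) ht1 htle rfl rfl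
        have hrhs : (if q.castSucc = j.castSucc then (1 : ℝ) else 0)
            = if t = j.val then 1 else 0 := by
          simp only [hδ, htdef]
        rw [hrhs, ← hstep]
        push_cast
        ring
  rw [effRes_eq_potential _ cwp_connected _ _ huv x hxl hx, hxcs]

end cwpres2

section cwpsum
open SimpleGraph
variable {m : ℕ}

lemma pot_zero_sub [NeZero (m + 3)] (i : Fin (m + 3)) :
    pot (m + 3) (((0 : Fin (m + 3)) - i).val) (((0 : Fin (m + 3)) - i).val)
      = pot (m + 3) i.val i.val := by
  by_cases hi : i = 0
  · subst hi
    rw [sub_self]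
  · have hi0 : i.val ≠ 0 := fun e => hi (Fin.ext (by simpa using e))
    have hv : ((0 : Fin (m + 3)) - i).val = (m + 3) - i.val := by
      rw [fin_sub_val (by omega), if_neg (by simp only [Fin.val_zero]; omega)]
      simp
    rw [hv, pot_symm (m + 3) i.val (by have := i.2; omega)]

lemma fin_sum_pot' (N : ℕ) [NeZero N] (c : Fin N) :
    ∑ d : Fin N, pot N ((c - d).val) ((c - d).val) = ∑ k ∈ Finset.range N, pot N k k := by
  rw [← Fin.sum_univ_eq_sum_range (fun k => pot N k k)]
  exact Fintype.sum_equiv (Equiv.subLeft c) _ _ (fun d => rfl)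



end cwpsum


lemma degRes_cwp (m : ℕ) :
    degRes (cycleWithPendent (m + 4))
      = (((m + 3 : ℕ) : ℝ) ^ 3 - ((m + 3 : ℕ) : ℝ)) / 3
        + 2 * (((m + 3 : ℕ) : ℝ) ^ 2 - 1) / 3 + 3 * ((m + 3 : ℕ) : ℝ) + 1 := by
  classical
  haveI : NeZero (m + 3) := ⟨by omega⟩
  rw [degRes_def]
  set G := cycleWithPendent (m + 4) with hG
  set N : ℝ := ((m + 3 : ℕ) : ℝ) with hN
  set Sv : ℝ := (N ^ 2 - 1) / 6 with hSv
  have hS : ∑ k ∈ Finset.range (m + 3), pot (m + 3) k k = Sv := sum_pot_self (m + 3) (by omega)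
  set f : Fin (m + 3) → ℝ := fun i => pot (m + 3) i.val i.val with hf
  have hf0 : f 0 = 0 := by
    simp only [hf, Fin.val_zero, pot_zero]
  have hfS : ∑ i : Fin (m + 3), f i = Sv := by
    rw [hf, Fin.sum_univ_eq_sum_range (fun k => pot (m + 3) k k), hS]
  have hdcs : ∀ i : Fin (m + 3), ((G.degree i.castSucc : ℕ) : ℝ)
      = 2 + (if i = 0 then 1 else 0) := by
    intro i
    by_cases hi : i = 0
    · subst hi; rw [hG, deg_cs_zero, if_pos rfl]; norm_num
    · rw [hG, deg_cs i hi, if_neg hi]; norm_num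
  have hdl : ((G.degree (Fin.last (m + 3)) : ℕ) : ℝ) = 1 := by
    rw [hG, deg_last]; norm_num
  have hPsum : ∀ i : Fin (m + 3),
      ∑ j : Fin (m + 3), pot (m + 3) ((j - i).val) ((j - i).val) = Sv := by
    intro i; rw [fin_sum_pot, hS]
  have hA : ∀ i : Fin (m + 3),
      (∑ v : Fin (m + 4), ((G.degree i.castSucc : ℝ) + (G.degree v : ℝ)) * effRes G i.castSucc v)
        = 4 * Sv + 4 * f i + 3 + (if i = 0 then Sv + 1 else 0) := by
    intro i
    rw [Fin.sum_univ_castSucc]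
    have h1 : ∀ j : Fin (m + 3),
        ((G.degree i.castSucc : ℝ) + (G.degree j.castSucc : ℝ)) * effRes G i.castSucc j.castSucc
          = (4 + (if i = 0 then 1 else 0)) * pot (m + 3) ((j - i).val) ((j - i).val)
            + (if j = 0 then pot (m + 3) ((j - i).val) ((j - i).val) else 0) := by
      intro j
      rw [hdcs i, hdcs j, hG, cwp_effRes_cyc]
      by_cases hj : j = 0
      · rw [if_pos hj, if_pos hj]; ring
      · rw [if_neg hj, if_neg hj]; ring
    have h2 : ((G.degree i.castSucc : ℝ) + (G.degree (Fin.last (m + 3)) : ℝ))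
          * effRes G i.castSucc (Fin.last (m + 3))
        = (2 + (if i = 0 then 1 else 0) + 1) * (1 + f i) := by
      rw [hdcs i, hdl, hG, cwp_effRes_pr, pot_zero_sub]
    rw [Finset.sum_congr rfl (fun j _ => h1 j), Finset.sum_add_distrib, ← Finset.mul_sum,
      hPsum i, Finset.sum_ite_eq' Finset.univ (0 : Fin (m + 3))
        (fun j => pot (m + 3) ((j - i).val) ((j - i).val)), if_pos (Finset.mem_univ _), h2]
    have h3 : pot (m + 3) (((0 : Fin (m + 3)) - i).val) (((0 : Fin (m + 3)) - i).val) = f i :=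
      pot_zero_sub i
    rw [h3]
    by_cases hi : i = 0
    · subst hi
      simp only [eq_self_iff_true, if_true, hf0]
      ring
    · simp only [if_neg hi]
      ring
  have hB : (∑ v : Fin (m + 4),
        ((G.degree (Fin.last (m + 3)) : ℝ) + (G.degree v : ℝ)) * effRes G (Fin.last (m + 3)) v)
      = 3 * N + 3 * Sv + 1 := by
    rw [Fin.sum_univ_castSucc]
    have h1 : ∀ j : Fin (m + 3),
        ((G.degree (Fin.last (m + 3)) : ℝ) + (G.degree j.castSucc : ℝ))
            * effRes G (Fin.last (m + 3)) j.castSucc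
          = (3 + 3 * f j) + (if j = 0 then 1 + f j else 0) := by
      intro j
      rw [hdl, hdcs j, hG, cwp_effRes_pl]
      by_cases hj : j = 0
      · rw [if_pos hj, if_pos hj]; simp only [hf]; ring
      · rw [if_neg hj, if_neg hj]; simp only [hf]; ring
    have h2 : effRes G (Fin.last (m + 3)) (Fin.last (m + 3)) = 0 := by
      rw [effRes_def, if_pos rfl]
    rw [Finset.sum_congr rfl (fun j _ => h1 j), Finset.sum_add_distrib, Finset.sum_add_distrib,
      Finset.sum_const, ← Finset.mul_sum, hfS,
      Finset.sum_ite_eq' Finset.univ (0 : Fin (m + 3)) (fun j => 1 + f j),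
      if_pos (Finset.mem_univ _), hf0, h2, Finset.card_univ, Fintype.card_fin, nsmul_eq_mul]
    rw [hN]
    push_cast
    ring
  rw [Fin.sum_univ_castSucc, Finset.sum_congr rfl (fun i _ => hA i), hB]
  have h4 : ∑ i : Fin (m + 3), (4 * Sv + 4 * f i + 3 + (if i = 0 then Sv + 1 else 0))
      = (m + 3 : ℕ) * (4 * Sv + 3) + 4 * Sv + (Sv + 1) := by
    have h5 : ∀ i : Fin (m + 3), 4 * Sv + 4 * f i + 3 + (if i = 0 then Sv + 1 else 0)
        = (4 * Sv + 3) + (4 * f i + (if i = 0 then Sv + 1 else 0)) := fun i => by ring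
    rw [Finset.sum_congr rfl (fun i _ => h5 i), Finset.sum_add_distrib, Finset.sum_add_distrib,
      Finset.sum_add_distrib, Finset.sum_const, Finset.sum_const, ← Finset.mul_sum, hfS,
      Finset.sum_ite_eq' Finset.univ (0 : Fin (m + 3)) (fun _ => Sv + 1),
      if_pos (Finset.mem_univ _), Finset.card_univ, Fintype.card_fin, nsmul_eq_mul, nsmul_eq_mul]
    push_cast
    ring
  rw [h4]
  rw [hSv, hN]
  push_cast
  ring


/-- `D_R(C_h) - D_R(S) = (h² - 8h + 6)/3` for `h ≥ 4`. -/
theorem stmt_4 (h : ℕ) (hh : 4 ≤ h) :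
    degRes (SimpleGraph.cycleGraph h) - degRes (cycleWithPendent h) =
      ((h : ℝ) ^ 2 - 8 * h + 6) / 3 := by
  obtain ⟨m, rfl⟩ : ∃ m, h = m + 4 := ⟨h - 4, by omega⟩
  rw [degRes_cycle, degRes_cwp]
  push_cast
  ring
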